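/- Let A be an invertible n×n real matrix and 1 ≤ l < n. Then the Hilbert–Schmidt (Frobenius) norm of B satisfies ‖B‖_{HS}² = Σ_{k=l+1}^n dist(X_k, H_{l,k})^{−2}, where dist denotes Euclidean distance in ℝ^n. -/

import Mathlib

open Matrix

noncomputable section

/-- `k`-th column of a matrix, as a vector of `EuclideanSpace ℝ (Fin n)`. -/
def col {n m : ℕ} (A : Matrix (Fin n) (Fin m) ℝ) (k : Fin m) : EuclideanSpace ℝ (Fin n) :=
  WithLp.toLp 2 (fun i => A i k)

/-- A plain vector viewed in `EuclideanSpace ℝ (Fin n)`. -/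
def toE {n : ℕ} (x : Fin n → ℝ) : EuclideanSpace ℝ (Fin n) := WithLp.toLp 2 x

/-- The `n × l` matrix of the first `l` columns of `A` (junk `0` columns if `l > n`). -/
def firstCols {n : ℕ} (A : Matrix (Fin n) (Fin n) ℝ) (l : ℕ) : Matrix (Fin n) (Fin l) ℝ :=
  fun i j => if h : (j : ℕ) < n then A i ⟨j, h⟩ else 0

/-- The `n × (n-l)` matrix of the last `n - l` columns of `A`. -/
def lastCols {n : ℕ} (A : Matrix (Fin n) (Fin n) ℝ) (l : ℕ) : Matrix (Fin n) (Fin (n - l)) ℝ :=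
  fun i j => A i ⟨l + j, by have := j.isLt; omega⟩

/-- `H_l`: the span of the last `n - l` columns of `A`, i.e. the columns `X_k` with
(0-based) index `k ≥ l` (paper's 1-based indices `k > l`). -/
def Hspan {n : ℕ} (A : Matrix (Fin n) (Fin n) ℝ) (l : ℕ) :
    Submodule ℝ (EuclideanSpace ℝ (Fin n)) :=
  Submodule.span ℝ (col A '' {k | l ≤ (k : ℕ)})

/-- `H_{l,k}`: the span of the columns `X_j` with (0-based) index `j ≥ l`, `j ≠ k`. -/
def Hspan' {n : ℕ} (A : Matrix (Fin n) (Fin n) ℝ) (l : ℕ) (k : Fin n) :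
    Submodule ℝ (EuclideanSpace ℝ (Fin n)) :=
  Submodule.span ℝ (col A '' {j | l ≤ (j : ℕ) ∧ j ≠ k})

/-- `Y_k* = P_l X_k*`, where `X_k*` is the `k`-th column of `(A⁻¹)ᵀ` and `P_l` is the
orthogonal projection onto `H_l`. -/
def Ystar {n : ℕ} (A : Matrix (Fin n) (Fin n) ℝ) (l : ℕ) (k : Fin n) :
    EuclideanSpace ℝ (Fin n) :=
  ↑(Submodule.orthogonalProjectionOnto (Hspan A l) (_root_.col A⁻¹ᵀ k))

/-- The `(n-l) × n` matrix `B` whose rows are `(Y_k*)ᵀ` for `k` ranging over the last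
`n - l` indices. -/
def Bmat {n : ℕ} (A : Matrix (Fin n) (Fin n) ℝ) (l : ℕ) : Matrix (Fin (n - l)) (Fin n) ℝ :=
  fun r i => Ystar A l ⟨l + r, by have := r.isLt; omega⟩ i

/-- Squared Hilbert–Schmidt (Frobenius) norm of a matrix. -/
def hsNormSq {n m : ℕ} (B : Matrix (Fin m) (Fin n) ℝ) : ℝ :=
  ∑ r, ∑ i, (B r i) ^ 2

/-- Hilbert–Schmidt (Frobenius) norm of a matrix. -/
def hsNorm {n m : ℕ} (B : Matrix (Fin m) (Fin n) ℝ) : ℝ :=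
  Real.sqrt (hsNormSq B)

/-- Operator (`ℓ² → ℓ²`) norm of a matrix, as the supremum of `‖Bx‖₂` over the unit
sphere. -/
def opNorm {n m : ℕ} (B : Matrix (Fin m) (Fin n) ℝ) : ℝ :=
  sSup ((fun x : EuclideanSpace ℝ (Fin n) => ‖toE (B *ᵥ fun i => x i)‖) '' {x | ‖x‖ = 1})

section Aux

variable {n : ℕ} (A : Matrix (Fin n) (Fin n) ℝ) (l : ℕ)

lemma inner_colstar_col (hA : IsUnit A) (j k : Fin n) :
    (inner ℝ (_root_.col A⁻¹ᵀ j) (_root_.col A k) : ℝ) = if j = k then (1:ℝ) else 0 := by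
  have h : A⁻¹ * A = 1 := Matrix.nonsing_inv_mul A ((Matrix.isUnit_iff_isUnit_det A).mp hA)
  have h2 := congrFun (congrFun h j) k
  rw [Matrix.mul_apply] at h2
  simp only [PiLp.inner_apply, RCLike.inner_apply, conj_trivial, _root_.col,
    Matrix.transpose_apply]
  convert h2.trans (Matrix.one_apply (i := j) (j := k)) using 1
  exact Finset.sum_congr rfl (fun x _ => mul_comm _ _)

lemma col_mem_Hspan (k : Fin n) (hk : l ≤ (k:ℕ)) : _root_.col A k ∈ Hspan A l :=
  Submodule.subset_span ⟨k, hk, rfl⟩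

lemma inner_Ystar_col (hA : IsUnit A) (k j : Fin n) (hj : l ≤ (j:ℕ)) :
    (inner ℝ (Ystar A l k) (_root_.col A j) : ℝ) = if k = j then (1:ℝ) else 0 := by
  rw [Ystar, ← Submodule.starProjection_apply, Submodule.inner_starProjection_left_eq_right,
    ← inner_colstar_col A hA k j]
  congr 1
  exact Submodule.starProjection_eq_self_iff.mpr (col_mem_Hspan A l j hj)

lemma inner_Ystar_mem_Hspan' (hA : IsUnit A) (k : Fin n) {v : EuclideanSpace ℝ (Fin n)}
    (hv : v ∈ Hspan' A l k) : (inner ℝ (Ystar A l k) v : ℝ) = 0 := by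
  induction hv using Submodule.span_induction with
  | mem x hx =>
    obtain ⟨j, ⟨hj1, hj2⟩, rfl⟩ := hx
    rw [inner_Ystar_col A l hA k j hj1, if_neg (fun h => hj2 h.symm)]
  | zero => simp
  | add x y _ _ hx hy => rw [inner_add_right, hx, hy]; ring
  | smul c x _ hx => rw [inner_smul_right, hx]; ring

lemma Hspan'_le (k : Fin n) : Hspan' A l k ≤ Hspan A l :=
  Submodule.span_mono (Set.image_mono (fun j hj => hj.1))

lemma inv_dist_sq_eq_norm_Ystar_sq (hA : IsUnit A) (k : Fin n) (hk : l ≤ (k:ℕ)) :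
    ((Metric.infDist (_root_.col A k)
        ((Hspan' A l k : Submodule ℝ _) : Set (EuclideanSpace ℝ (Fin n)))) ^ 2)⁻¹
      = ‖Ystar A l k‖ ^ 2 := by
  set K := Hspan' A l k with hK
  set w : EuclideanSpace ℝ (Fin n) :=
    _root_.col A k - ↑(Submodule.orthogonalProjectionOnto K (_root_.col A k)) with hw
  have hdist : Metric.infDist (_root_.col A k) (K : Set _) = ‖w‖ := by
    rw [Metric.infDist_eq_iInf]
    simp_rw [dist_eq_norm]
    exact (Submodule.starProjection_minimal _).symm
  have hwK : ∀ v ∈ K, (inner ℝ v w : ℝ) = 0 := fun v hv =>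
    (Submodule.mem_orthogonal _ _).mp
      (Submodule.sub_starProjection_mem_orthogonal (K := K) (_root_.col A k)) v hv
  have hYw : (inner ℝ (Ystar A l k) w : ℝ) = 1 := by
    rw [hw, inner_sub_right, inner_Ystar_col A l hA k k hk, if_pos rfl,
      inner_Ystar_mem_Hspan' A l hA k (SetLike.coe_mem _), sub_zero]
  have hwne : w ≠ 0 := by
    intro h; rw [h, inner_zero_right] at hYw; norm_num at hYw
  have hnw : ‖w‖ ^ 2 ≠ 0 := pow_ne_zero _ (norm_ne_zero_iff.mpr hwne)
  have hwk : (inner ℝ w (_root_.col A k) : ℝ) = ‖w‖ ^ 2 := by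
    have h1 : _root_.col A k = w + ↑(Submodule.orthogonalProjectionOnto K (_root_.col A k)) := by
      rw [hw]; abel
    have h2 : (inner ℝ w (↑(Submodule.orthogonalProjectionOnto K (_root_.col A k))) : ℝ) = 0 := by
      rw [real_inner_comm]; exact hwK _ (SetLike.coe_mem _)
    rw [h1, inner_add_right, h2, add_zero, real_inner_self_eq_norm_sq]
  set c : ℝ := (‖w‖ ^ 2)⁻¹ with hc
  set z := Ystar A l k - c • w with hz
  have hzj : ∀ j : Fin n, l ≤ (j:ℕ) → (inner ℝ z (_root_.col A j) : ℝ) = 0 := by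
    intro j hj
    rw [hz, inner_sub_left, real_inner_smul_left, inner_Ystar_col A l hA k j hj]
    by_cases h : k = j
    · subst h; rw [if_pos rfl, hwk, hc]; field_simp; ring
    · rw [if_neg h, real_inner_comm,
        hwK _ (Submodule.subset_span ⟨j, ⟨hj, fun e => h e.symm⟩, rfl⟩)]
      ring
  have hzH : ∀ v ∈ Hspan A l, (inner ℝ z v : ℝ) = 0 := by
    intro v hv
    induction hv using Submodule.span_induction with
    | mem x hx => obtain ⟨j, hj, rfl⟩ := hx; exact hzj j hj
    | zero => simp
    | add x y _ _ hx hy => rw [inner_add_right, hx, hy]; ring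
    | smul a x _ hx => rw [inner_smul_right, hx]; ring
  have hzmem : z ∈ Hspan A l := by
    apply Submodule.sub_mem _ (SetLike.coe_mem _)
    exact Submodule.smul_mem _ _
      (Submodule.sub_mem _ (col_mem_Hspan A l k hk)
        (Hspan'_le A l k (SetLike.coe_mem _)))
  have hz0 : z = 0 := inner_self_eq_zero.mp (hzH z hzmem)
  have hY : Ystar A l k = c • w := by rwa [hz, sub_eq_zero] at hz0
  rw [hdist, hY, norm_smul, Real.norm_eq_abs, abs_of_nonneg (by positivity), hc]
  field_simp

lemma norm_sq_eq_sum_sq (x : EuclideanSpace ℝ (Fin n)) : ∑ i, x i ^ 2 = ‖x‖ ^ 2 := by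
  rw [EuclideanSpace.norm_eq, Real.sq_sqrt (by positivity)]
  simp [sq_abs]

end Aux

/-- **Step 1.2.1 identity.** For an invertible `n × n` matrix `A` and `1 ≤ l < n`, the
squared Hilbert–Schmidt norm of `B` equals `Σ_{k>l} dist(X_k, H_{l,k})⁻²`. -/
theorem hsNormSq_Bmat_eq_sum_inv_dist_sq (n l : ℕ) (hl : 1 ≤ l) (hln : l < n)
    (A : Matrix (Fin n) (Fin n) ℝ) (hA : IsUnit A) :
    hsNormSq (Bmat A l) =
      ∑ k ∈ Finset.univ.filter (fun k : Fin n => l ≤ (k : ℕ)),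
        ((Metric.infDist (_root_.col A k) (Hspan' A l k : Set (EuclideanSpace ℝ (Fin n)))) ^ 2)⁻¹ := by
  have hrhs : ∀ k ∈ Finset.univ.filter (fun k : Fin n => l ≤ (k : ℕ)),
      ((Metric.infDist (_root_.col A k) (Hspan' A l k : Set (EuclideanSpace ℝ (Fin n)))) ^ 2)⁻¹
        = ‖Ystar A l k‖ ^ 2 := by
    intro k hk
    exact inv_dist_sq_eq_norm_Ystar_sq A l hA k (by simpa using hk)
  rw [Finset.sum_congr rfl hrhs]
  unfold hsNormSq
  have hlhs : ∀ r : Fin (n - l),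
      ∑ i, (Bmat A l r i) ^ 2 = ‖Ystar A l ⟨l + r, by have := r.isLt; omega⟩‖ ^ 2 := by
    intro r
    exact norm_sq_eq_sum_sq _
  rw [Finset.sum_congr rfl (fun r _ => hlhs r)]
  refine Finset.sum_bij' (fun (r : Fin (n - l)) _ => (⟨l + r, by have := r.isLt; omega⟩ : Fin n))
    (fun (k : Fin n) hk => (⟨(k : ℕ) - l, by
      have h1 := k.isLt
      have h2 : l ≤ (k : ℕ) := by simpa using hk
      omega⟩ : Fin (n - l)))
    (fun r _ => by simp) (fun k hk => Finset.mem_univ _)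
    (fun r _ => by apply Fin.ext; simp)
    (fun k hk => by
      have hk' : l ≤ (k : ℕ) := by simpa using hk
      apply Fin.ext; simp [Nat.add_sub_cancel' hk'])
    (fun r _ => rfl)

end
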